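/- Let t, k, d, N be positive integers and 2 ≤ v_1 ≤ v_2 ≤ ⋯ ≤ v_k with t < k and d < v_1. If A is a (d,t)-DTA(N; k, (v_1,…,v_k)), then |ρ(A,T)| ≥ d+1 for every t-way interaction T. -/

import Mathlib

/-- An array `A` (rows indexed by `R`, columns by `J`) is of type `v` if every
entry in column `j` lies in `Z_{v j} = {0, 1, …, v j - 1}`. -/
def IsArray {R J : Type*} (v : J → ℕ) (A : R → J → ℕ) : Prop :=
  ∀ r j, A r j < v j

/-- An `s`-way interaction: a set of `s` pairs `(j, σ)` with pairwise distinct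
column indices `j` and value `σ ∈ Z_{v j}`. -/
def IsInteraction {J : Type*} [DecidableEq J] (v : J → ℕ) (s : ℕ)
    (T : Finset (J × ℕ)) : Prop :=
  T.card = s ∧ (T.image Prod.fst).card = s ∧ ∀ p ∈ T, p.2 < v p.1

/-- `rho A T`: the set of rows of `A` in which the interaction `T` is covered. -/
def rho {R J : Type*} [Fintype R] (A : R → J → ℕ) (T : Finset (J × ℕ)) :
    Finset R :=
  Finset.univ.filter fun r => ∀ p ∈ T, A r p.1 = p.2

/-- `rhoSet A 𝒯 = ⋃_{T ∈ 𝒯} rho A T`. -/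
def rhoSet {R J : Type*} [Fintype R] [DecidableEq R] (A : R → J → ℕ)
    (Ts : Finset (Finset (J × ℕ))) : Finset R :=
  Ts.sup (rho A)

/-- A `(d,t)`-detecting array of type `v`: for every `t`-way interaction `T` and
every set `𝒯` of exactly `d` `t`-way interactions,
`ρ(A,T) ⊆ ρ(A,𝒯) ↔ T ∈ 𝒯`. -/
def IsDTA {R J : Type*} [Fintype R] [DecidableEq R] [DecidableEq J] (v : J → ℕ) (d t : ℕ)
    (A : R → J → ℕ) : Prop :=
  IsArray v A ∧
    ∀ T : Finset (J × ℕ), IsInteraction v t T →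
      ∀ Ts : Finset (Finset (J × ℕ)), Ts.card = d →
        (∀ T' ∈ Ts, IsInteraction v t T') →
          (rho A T ⊆ rhoSet A Ts ↔ T ∈ Ts)

/-- A mixed covering array `MCA_λ(N; t, k, v)`: an array of type `v` such that
`|ρ(A,T)| ≥ λ` for every `t`-way interaction `T`. -/
def IsMCA {R J : Type*} [Fintype R] [DecidableEq J] (v : J → ℕ) (lam t : ℕ)
    (A : R → J → ℕ) : Prop :=
  IsArray v A ∧ ∀ T : Finset (J × ℕ), IsInteraction v t T → lam ≤ (rho A T).card

/-- Super-simple of strength `t`: every `(t+1)`-way interaction is covered by at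
most one row. -/
def IsSuperSimple {R J : Type*} [Fintype R] [DecidableEq J] (v : J → ℕ) (t : ℕ)
    (A : R → J → ℕ) : Prop :=
  ∀ T : Finset (J × ℕ), IsInteraction v (t + 1) T → (rho A T).card ≤ 1

/-- An orthogonal array `OA_λ(t, k, v)`: all entries in `Z_v` and
`|ρ(A,T)| = λ` for every `t`-way interaction `T`. (The size requirement
`N = λ·v^t` is imposed on the row-index type in the statements.) -/
def IsOA {R J : Type*} [Fintype R] [DecidableEq J] (vlev lam t : ℕ)
    (A : R → J → ℕ) : Prop :=
  IsArray (fun _ : J => vlev) A ∧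
    ∀ T : Finset (J × ℕ), IsInteraction (fun _ : J => vlev) t T →
      (rho A T).card = lam

/-- `Te` is an extension of the interaction `T`: it is obtained from `T` by
adjoining one pair `(j, σ)` with `σ ∈ Z_{v j}` whose column index `j` occurs in
no pair of `T`. -/
def IsExtension {J : Type*} [DecidableEq J] (v : J → ℕ)
    (T Te : Finset (J × ℕ)) : Prop :=
  ∃ p : J × ℕ, p.2 < v p.1 ∧ (∀ q ∈ T, q.1 ≠ p.1) ∧ Te = insert p T

/-- `A` is `d`-extendible (with respect to strength `t`): for every `t`-way
interaction `T` and every list of `d` extensions `T_1, …, T_d` of `T`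
(repetitions allowed), `ρ(A,T) \ (ρ(A,T_1) ∪ ⋯ ∪ ρ(A,T_d))` is nonempty. -/
def IsExtendible {R J : Type*} [Fintype R] [DecidableEq J] (v : J → ℕ)
    (d t : ℕ) (A : R → J → ℕ) : Prop :=
  ∀ T : Finset (J × ℕ), IsInteraction v t T →
    ∀ Te : Fin d → Finset (J × ℕ), (∀ i, IsExtension v T (Te i)) →
      ∃ r ∈ rho A T, ∀ i, r ∉ rho A (Te i)

/-- Lemma: every `t`-way interaction of a `(d,t)`-DTA is covered by
at least `d+1` rows. -/
theorem stmt_0 {t k d N : ℕ} (ht : 0 < t) (hk : 0 < k) (hd : 0 < d) (hN : 0 < N)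
    (v : Fin k → ℕ) (hmono : Monotone v) (hv2 : 2 ≤ v ⟨0, hk⟩)
    (htk : t < k) (hdv : d < v ⟨0, hk⟩)
    (A : Fin N → Fin k → ℕ) (hA : IsDTA v d t A) :
    ∀ T : Finset (Fin k × ℕ), IsInteraction v t T → d + 1 ≤ (rho A T).card := by
  intro T hT
  by_contra hlt
  push_neg at hlt
  have hcardle : (rho A T).card ≤ d := Nat.lt_succ_iff.mp hlt
  obtain ⟨hTcard, hTcols, hTval⟩ := hT
  have hinj : Set.InjOn Prod.fst (T : Set (Fin k × ℕ)) :=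
    Finset.card_image_iff.mp (by rw [hTcols, hTcard])
  have hTne : T.Nonempty := Finset.card_pos.mp (by rw [hTcard]; exact ht)
  obtain ⟨p0, hp0⟩ := hTne
  have hCcard : (T.image Prod.fst).card < k := by rw [hTcols]; exact htk
  obtain ⟨j, hj⟩ : ∃ j : Fin k, j ∉ T.image Prod.fst := by
    by_contra h
    push_neg at h
    rw [Finset.eq_univ_iff_forall.mpr h, Finset.card_univ, Fintype.card_fin] at hCcard
    exact lt_irrefl _ hCcard
  set base := T.erase p0 with hbase
  have hbasesub : base ⊆ T := Finset.erase_subset _ _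
  have hbasecard : base.card = t - 1 := by
    rw [hbase, Finset.card_erase_of_mem hp0, hTcard]
  have hbasecols : ∀ q ∈ base, q.1 ≠ p0.1 := by
    intro q hq h
    exact (Finset.ne_of_mem_erase hq) (hinj (hbasesub hq) hp0 h)
  have hbasej : ∀ q ∈ base, q.1 ≠ j := by
    intro q hq h
    exact hj (Finset.mem_image.mpr ⟨q, hbasesub hq, h⟩)
  have hinjb : Set.InjOn Prod.fst ↑base :=
    hinj.mono (by exact_mod_cast hbasesub)
  -- helper: insert a fresh pair into base gives a t-way interaction
  have hint : ∀ q : Fin k × ℕ, q.2 < v q.1 → (∀ p ∈ base, p.1 ≠ q.1) →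
      IsInteraction v t (insert q base) := by
    intro q hq hfresh
    have hqnot : q ∉ base := fun h => hfresh q h rfl
    have hqcol : q.1 ∉ base.image Prod.fst := by
      intro h
      obtain ⟨p, hp, hpe⟩ := Finset.mem_image.mp h
      exact hfresh p hp hpe
    refine ⟨?_, ?_, ?_⟩
    · rw [Finset.card_insert_of_notMem hqnot, hbasecard]
      omega
    · rw [Finset.image_insert, Finset.card_insert_of_notMem hqcol,
        Finset.card_image_of_injOn hinjb, hbasecard]
      omega
    · intro p hp
      rcases Finset.mem_insert.mp hp with h | h
      · rw [h]; exact hq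
      · exact hTval p (hbasesub h)
  -- the set S of interactions obtained by switching column of p0 to j
  set S : Finset (Finset (Fin k × ℕ)) :=
    (rho A T).image (fun r => insert (j, A r j) base) with hS
  have hScard : S.card ≤ d := le_trans Finset.card_image_le hcardle
  -- padding interactions: change the value of p0
  set P : Finset (Finset (Fin k × ℕ)) :=
    ((Finset.range (v p0.1)).erase p0.2).image (fun σ => insert (p0.1, σ) base) with hP
  have hPinj : Set.InjOn (fun σ => insert (p0.1, σ) base)
      ↑((Finset.range (v p0.1)).erase p0.2) := by
    intro a _ b _ hab
    have hab' : insert (p0.1, a) base = insert (p0.1, b) base := hab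
    have : (p0.1, a) ∈ insert (p0.1, b) base :=
      hab' ▸ Finset.mem_insert_self (p0.1, a) base
    rcases Finset.mem_insert.mp this with h | h
    · exact congrArg Prod.snd h
    · exact absurd rfl (hbasecols (p0.1, a) h)
  have hp0v : p0.2 < v p0.1 := hTval p0 hp0
  have hPcard : P.card = v p0.1 - 1 := by
    rw [hP, Finset.card_image_of_injOn hPinj,
      Finset.card_erase_of_mem (Finset.mem_range.mpr hp0v), Finset.card_range]
  have hvp0 : v ⟨0, hk⟩ ≤ v p0.1 := hmono (by simp [Fin.le_def])
  have hdP : d ≤ P.card := by omega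
  -- S and P are disjoint
  have hSP : Disjoint S P := by
    rw [Finset.disjoint_left]
    intro X hXS hXP
    obtain ⟨r, _, hXr⟩ := Finset.mem_image.mp hXS
    obtain ⟨σ, _, hXσ⟩ := Finset.mem_image.mp hXP
    have : (j, A r j) ∈ insert (p0.1, σ) base := by
      rw [hXσ, ← hXr]; exact Finset.mem_insert_self _ _
    rcases Finset.mem_insert.mp this with h | h
    · have : j = p0.1 := congrArg Prod.fst h
      exact hj (Finset.mem_image.mpr ⟨p0, hp0, this.symm⟩)
    · exact hbasej _ h rfl
  obtain ⟨Q, hQP, hQcard⟩ := Finset.exists_subset_card_eq (s := P) (n := d - S.card) (by omega)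
  set Ts := S ∪ Q with hTs
  have hTscard : Ts.card = d := by
    rw [hTs, Finset.card_union_of_disjoint
      (Finset.disjoint_of_subset_right hQP hSP), hQcard]
    omega
  have hall : ∀ T' ∈ Ts, IsInteraction v t T' := by
    intro T' hT'
    rcases Finset.mem_union.mp hT' with h | h
    · obtain ⟨r, _, hXr⟩ := Finset.mem_image.mp h
      rw [← hXr]
      exact hint (j, A r j) (hA.1 r j) hbasej
    · obtain ⟨σ, hσ, hXσ⟩ := Finset.mem_image.mp (hQP h)
      rw [← hXσ]
      exact hint (p0.1, σ)
        (Finset.mem_range.mp (Finset.mem_of_mem_erase hσ)) hbasecols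
  have hsub : rho A T ⊆ rhoSet A Ts := by
    intro r hr
    rw [rhoSet, Finset.mem_sup]
    refine ⟨insert (j, A r j) base, Finset.mem_union_left _
      (Finset.mem_image.mpr ⟨r, hr, rfl⟩), ?_⟩
    simp only [rho, Finset.mem_filter, Finset.mem_univ, true_and]
    intro p hp
    rcases Finset.mem_insert.mp hp with h | h
    · rw [h]
    · have hrm := (Finset.mem_filter.mp hr).2
      exact hrm p (hbasesub h)
  have hTTs : T ∈ Ts := (hA.2 T ⟨hTcard, hTcols, hTval⟩ Ts hTscard hall).mp hsub
  rcases Finset.mem_union.mp hTTs with h | h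
  · obtain ⟨r, _, hXr⟩ := Finset.mem_image.mp h
    have : (j, A r j) ∈ T := by rw [← hXr]; exact Finset.mem_insert_self _ _
    exact hj (Finset.mem_image.mpr ⟨_, this, rfl⟩)
  · obtain ⟨σ, hσ, hXσ⟩ := Finset.mem_image.mp (hQP h)
    have hmem : (p0.1, σ) ∈ T := by rw [← hXσ]; exact Finset.mem_insert_self _ _
    have : (p0.1, σ) = p0 := hinj hmem hp0 rfl
    have : σ = p0.2 := congrArg Prod.snd this
    exact (Finset.ne_of_mem_erase hσ) this
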